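/- arXiv:1305.5502 — 3 statements merged into one kernel-verified Lean document; each statement's English description precedes it below -/
import Mathlib

section
/- The natural density of pairs of coprime positive integers is 1/ζ(2); i.e., the limit as N → ∞ of (1/N²)·#{(x,y) : 1 ≤ x,y ≤ N, gcd(x,y) = 1} equals 6/π². -/
open Filter Finset ArithmeticFunction
open scoped ArithmeticFunction.Moebius

lemma divisors_eq_filter {g N : ℕ} (hg : 1 ≤ g) (hgN : g ≤ N) :
    g.divisors = (Finset.Icc 1 N).filter (· ∣ g) := by
  ext a
  simp only [Nat.mem_divisors, Finset.mem_filter, Finset.mem_Icc]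
  constructor
  · rintro ⟨hd, -⟩
    refine ⟨⟨?_, le_trans (Nat.le_of_dvd hg hd) hgN⟩, hd⟩
    rcases Nat.eq_zero_or_pos a with rfl | h
    · exfalso; rw [Nat.zero_dvd] at hd; omega
    · exact h
  · rintro ⟨-, hd⟩
    exact ⟨hd, by omega⟩

lemma card_dvd_pairs (N d : ℕ) :
    ((Finset.Icc 1 N ×ˢ Finset.Icc 1 N).filter
      (fun p : ℕ × ℕ => d ∣ Nat.gcd p.1 p.2)).card = (N / d) ^ 2 := by
  have h1 : ((Finset.Icc 1 N ×ˢ Finset.Icc 1 N).filter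
      (fun p : ℕ × ℕ => d ∣ Nat.gcd p.1 p.2)) =
      ((Finset.Icc 1 N).filter (fun x => d ∣ x)) ×ˢ
        ((Finset.Icc 1 N).filter (fun x => d ∣ x)) := by
    rw [← Finset.filter_product]
    apply Finset.filter_congr
    intro p _
    exact Nat.dvd_gcd_iff
  have h2 : ((Finset.Icc 1 N).filter (fun x => d ∣ x)).card = N / d := by
    rw [show (Finset.Icc 1 N) = Finset.Ioc 0 N by ext x; simp only [Finset.mem_Icc, Finset.mem_Ioc]; omega]
    exact Nat.Ioc_filter_dvd_card_eq_div N d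
  rw [h1, Finset.card_product, h2, sq]

lemma card_coprime_eq (N : ℕ) :
    ((((Finset.Icc 1 N ×ˢ Finset.Icc 1 N).filter
        (fun p : ℕ × ℕ => Nat.gcd p.1 p.2 = 1)).card : ℤ)) =
      ∑ d ∈ Finset.Icc 1 N, μ d * ((N / d : ℕ) : ℤ) ^ 2 := by
  have h1 : ∀ p ∈ (Finset.Icc 1 N ×ˢ Finset.Icc 1 N),
      (if Nat.gcd p.1 p.2 = 1 then (1 : ℤ) else 0)
        = ∑ d ∈ Finset.Icc 1 N, if d ∣ Nat.gcd p.1 p.2 then μ d else 0 := by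
    intro p hp
    simp only [Finset.mem_product, Finset.mem_Icc] at hp
    have hg1 : 1 ≤ Nat.gcd p.1 p.2 :=
      Nat.one_le_iff_ne_zero.mpr (Nat.gcd_ne_zero_left (by omega))
    have hgN : Nat.gcd p.1 p.2 ≤ N :=
      le_trans (Nat.le_of_dvd (by omega) (Nat.gcd_dvd_left _ _)) hp.1.2
    have h2 : ∑ d ∈ (Nat.gcd p.1 p.2).divisors, μ d
        = if Nat.gcd p.1 p.2 = 1 then (1 : ℤ) else 0 := by
      rw [← coe_mul_zeta_apply, moebius_mul_coe_zeta, one_apply]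
    rw [← h2, divisors_eq_filter hg1 hgN, Finset.sum_filter]
  have h0 : ((((Finset.Icc 1 N ×ˢ Finset.Icc 1 N).filter
        (fun p : ℕ × ℕ => Nat.gcd p.1 p.2 = 1)).card : ℤ))
      = ∑ p ∈ Finset.Icc 1 N ×ˢ Finset.Icc 1 N,
          if Nat.gcd p.1 p.2 = 1 then (1 : ℤ) else 0 := by
    rw [Finset.card_filter]
    push_cast
    rfl
  rw [h0, Finset.sum_congr rfl h1, Finset.sum_comm]
  refine Finset.sum_congr rfl fun d _ => ?_
  rw [← Finset.sum_filter, Finset.sum_const, card_dvd_pairs, nsmul_eq_mul]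
  push_cast
  ring

lemma tsum_moebius_div_sq : ∑' d : ℕ, (μ d : ℝ) * ((1 : ℝ) / d) ^ 2 = 6 / Real.pi ^ 2 := by
  have hs : (1 : ℝ) < (2 : ℂ).re := by norm_num
  have hL : LSeries (fun n => (μ n : ℂ)) 2 = 6 / (Real.pi : ℂ) ^ 2 := by
    have h1 := LSeries_zeta_mul_Lseries_moebius (s := 2) hs
    have h2 := LSeries_zeta_eq_riemannZeta (s := 2) hs
    rw [h2, riemannZeta_two] at h1
    have hpi : ((Real.pi : ℂ)) ^ 2 ≠ 0 := by
      simpa using Complex.ofReal_ne_zero.mpr Real.pi_ne_zero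
    field_simp at h1 ⊢
    linear_combination h1
  have hterm : ∀ n : ℕ, LSeries.term (fun n => (μ n : ℂ)) 2 n
      = (((μ n : ℝ) * ((1 : ℝ) / n) ^ 2 : ℝ) : ℂ) := by
    intro n
    rcases eq_or_ne n 0 with rfl | hn
    · simp [LSeries.term]
    · rw [LSeries.term_of_ne_zero hn]
      have hn' : ((n : ℂ)) ≠ 0 := Nat.cast_ne_zero.mpr hn
      rw [show (2 : ℂ) = ((2 : ℕ) : ℂ) by norm_num, Complex.cpow_natCast]
      push_cast
      field_simp
  have key : ((∑' d : ℕ, (μ d : ℝ) * ((1 : ℝ) / d) ^ 2 : ℝ) : ℂ)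
      = 6 / (Real.pi : ℂ) ^ 2 := by
    rw [Complex.ofReal_tsum, ← hL, LSeries]
    exact tsum_congr fun n => (hterm n).symm
  have h6 : ((6 / Real.pi ^ 2 : ℝ) : ℂ) = 6 / (Real.pi : ℂ) ^ 2 := by push_cast; ring
  exact Complex.ofReal_injective (key.trans h6.symm)

lemma div_cast_tendsto {d : ℕ} (hd : 1 ≤ d) :
    Tendsto (fun N : ℕ => ((N / d : ℕ) : ℝ) / N) atTop (nhds (1 / d)) := by
  have hd' : (0 : ℝ) < d := by positivity
  apply tendsto_of_tendsto_of_tendsto_of_le_of_le'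
    (g := fun N : ℕ => 1 / (d : ℝ) - 1 / N) (h := fun _ : ℕ => 1 / (d : ℝ))
  · have : Tendsto (fun N : ℕ => 1 / (N : ℝ)) atTop (nhds 0) :=
      tendsto_one_div_atTop_nhds_zero_nat
    simpa using (tendsto_const_nhds (x := 1 / (d : ℝ))).sub this
  · exact tendsto_const_nhds
  · filter_upwards [eventually_ge_atTop 1] with N hN
    have hN' : (0 : ℝ) < N := by exact_mod_cast hN
    have h1 : (N : ℝ) < d * ((N / d : ℕ) : ℝ) + d := by
      have := Nat.div_add_mod N d
      have hm : N % d < d := Nat.mod_lt _ hd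
      have : (N : ℝ) = d * ((N / d : ℕ) : ℝ) + ((N % d : ℕ) : ℝ) := by
        exact_mod_cast (Nat.div_add_mod N d).symm
      rw [this]
      have : ((N % d : ℕ) : ℝ) < d := by exact_mod_cast hm
      linarith
    rw [sub_le_iff_le_add, ← add_div, div_le_div_iff₀ hd' hN', one_mul]
    linarith
  · filter_upwards [eventually_ge_atTop 1] with N hN
    have hN' : (0 : ℝ) < N := by exact_mod_cast hN
    have h2 : ((N / d : ℕ) : ℝ) * d ≤ N := by
      exact_mod_cast Nat.div_mul_le_self N d
    rw [div_le_div_iff₀ hN' hd']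
    linarith

theorem coprime_pairs_density :
    Tendsto (fun N : ℕ =>
        (((Finset.Icc 1 N ×ˢ Finset.Icc 1 N).filter
            (fun p : ℕ × ℕ => Nat.gcd p.1 p.2 = 1)).card : ℝ) / (N : ℝ) ^ 2)
      atTop (nhds (6 / Real.pi ^ 2)) := by
  set f : ℕ → ℕ → ℝ := fun N d => (μ d : ℝ) * (((N / d : ℕ) : ℝ) / N) ^ 2 with hf
  have habs : ∀ n : ℕ, |(μ n : ℝ)| ≤ 1 := by
    intro n; rcases moebius_eq_or n with h | h | h <;> simp [h]
  have heq : (fun N : ℕ =>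
      (((Finset.Icc 1 N ×ˢ Finset.Icc 1 N).filter
          (fun p : ℕ × ℕ => Nat.gcd p.1 p.2 = 1)).card : ℝ) / (N : ℝ) ^ 2)
      = fun N : ℕ => ∑' d : ℕ, f N d := by
    funext N
    have h1 : (((Finset.Icc 1 N ×ˢ Finset.Icc 1 N).filter
        (fun p : ℕ × ℕ => Nat.gcd p.1 p.2 = 1)).card : ℝ)
        = ∑ d ∈ Finset.Icc 1 N, (μ d : ℝ) * ((N / d : ℕ) : ℝ) ^ 2 := by
      have hz := congrArg (fun z : ℤ => (z : ℝ)) (card_coprime_eq N)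
      push_cast at hz
      exact hz
    have h2 : ∑' d : ℕ, f N d = ∑ d ∈ Finset.Icc 1 N, f N d := by
      apply tsum_eq_sum
      intro d hd
      simp only [Finset.mem_Icc, not_and, not_le] at hd
      rcases Nat.eq_zero_or_pos d with rfl | hd1
      · simp [hf]
      · have : N < d := hd hd1
        simp [hf, Nat.div_eq_of_lt this]
    rw [h1, h2, Finset.sum_div]
    refine Finset.sum_congr rfl fun d _ => ?_
    simp only [hf]
    ring
  rw [heq, ← tsum_moebius_div_sq]
  apply tendsto_tsum_of_dominated_convergence (bound := fun d : ℕ => ((1 : ℝ) / d) ^ 2)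
  · have h := Real.summable_one_div_nat_pow.mpr (by norm_num : 1 < 2)
    exact h.congr fun n => by rw [div_pow, one_pow]
  · intro d
    rcases Nat.eq_zero_or_pos d with rfl | hd
    · simpa [hf] using tendsto_const_nhds
    · have := div_cast_tendsto hd
      simpa [hf] using (tendsto_const_nhds (x := (μ d : ℝ))).mul (this.pow 2)
  · apply Filter.Eventually.of_forall
    intro N d
    have hq : (0 : ℝ) ≤ ((N / d : ℕ) : ℝ) / N := by positivity
    have hle : ((N / d : ℕ) : ℝ) / N ≤ 1 / d := by
      rcases Nat.eq_zero_or_pos d with rfl | hd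
      · simp
      rcases Nat.eq_zero_or_pos N with rfl | hN
      · simp
      have hN' : (0 : ℝ) < N := by exact_mod_cast hN
      have hd' : (0 : ℝ) < d := by exact_mod_cast hd
      rw [div_le_div_iff₀ hN' hd', one_mul]
      exact_mod_cast Nat.div_mul_le_self N d
    have : ‖f N d‖ = |(μ d : ℝ)| * (((N / d : ℕ) : ℝ) / N) ^ 2 := by
      simp [hf, abs_mul, sq_abs, Real.norm_eq_abs]
    rw [this]
    calc |(μ d : ℝ)| * (((N / d : ℕ) : ℝ) / N) ^ 2
        ≤ 1 * (((N / d : ℕ) : ℝ) / N) ^ 2 := by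
          apply mul_le_mul_of_nonneg_right (habs d) (by positivity)
      _ = (((N / d : ℕ) : ℝ) / N) ^ 2 := one_mul _
      _ ≤ ((1 : ℝ) / d) ^ 2 := pow_le_pow_left₀ hq hle 2
end

section
/- For any integer k ≥ 2, the natural density of k-tuples of positive integers with gcd equal to 1 is 1/ζ(k); i.e., lim_{N→∞} (1/N^k)·#{(x₁,…,x_k) ∈ [1,N]^k : gcd(x₁,…,x_k) = 1} = 1/ζ(k). -/
open Filter

open Finset ArithmeticFunction
open scoped ArithmeticFunction.Moebius ArithmeticFunction.zeta

lemma count_div (k N d : ℕ) :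
    (((Fintype.piFinset fun _ : Fin k => Finset.Icc 1 N).filter
        (fun x : Fin k → ℕ => ∀ i, d ∣ x i)).card) = (N / d) ^ k := by
  have : ((Fintype.piFinset fun _ : Fin k => Finset.Icc 1 N).filter
        (fun x : Fin k → ℕ => ∀ i, d ∣ x i))
      = Fintype.piFinset fun _ : Fin k => (Finset.Icc 1 N).filter (d ∣ ·) := by
    ext x
    simp [Fintype.mem_piFinset, forall_and]
  rw [this, Fintype.card_piFinset]
  have : ((Finset.Icc 1 N).filter (d ∣ ·)).card = N / d := by
    rw [show Finset.Icc 1 N = Finset.Ioc 0 N from rfl]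
    exact Nat.Ioc_filter_dvd_card_eq_div N d
  simp [this]

lemma count_eq (k N : ℕ) (hk : 0 < k) :
    ((((Fintype.piFinset fun _ : Fin k => Finset.Icc 1 N).filter
        (fun x : Fin k → ℕ => Finset.univ.gcd x = 1)).card : ℤ)) =
      ∑ d ∈ Finset.Icc 1 N, μ d * ((N / d : ℕ) : ℤ) ^ k := by
  classical
  set S := Fintype.piFinset fun _ : Fin k => Finset.Icc 1 N with hS
  have hgcd : ∀ x ∈ S, Finset.univ.gcd x ≠ 0 ∧ Finset.univ.gcd x ≤ N := by
    intro x hx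
    obtain ⟨i⟩ : Nonempty (Fin k) := ⟨⟨0, hk⟩⟩
    have hxi : x i ∈ Finset.Icc 1 N := by
      rw [Fintype.mem_piFinset] at hx; exact hx i
    rw [Finset.mem_Icc] at hxi
    have hdvd : Finset.univ.gcd x ∣ x i := Finset.gcd_dvd (Finset.mem_univ i)
    have hpos : 0 < x i := hxi.1
    constructor
    · intro h0
      rw [h0] at hdvd
      simp [Nat.eq_zero_of_zero_dvd hdvd] at hpos
    · exact le_trans (Nat.le_of_dvd hpos hdvd) hxi.2
  have key : ∀ x ∈ S,
      ((if Finset.univ.gcd x = 1 then (1:ℤ) else 0)) =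
        ∑ d ∈ Finset.Icc 1 N, if d ∣ Finset.univ.gcd x then μ d else 0 := by
    intro x hx
    obtain ⟨h0, hle⟩ := hgcd x hx
    have h1 : (∑ d ∈ (Finset.univ.gcd x).divisors, μ d)
        = (1 : ArithmeticFunction ℤ) (Finset.univ.gcd x) := by
      rw [← moebius_mul_coe_zeta, coe_mul_zeta_apply]
    rw [one_apply] at h1
    have h2 : (Finset.univ.gcd x).divisors ⊆ Finset.Icc 1 N := by
      intro d hd
      rw [Nat.mem_divisors] at hd
      rw [Finset.mem_Icc]
      exact ⟨Nat.one_le_iff_ne_zero.2 fun h => by simp [h, Nat.eq_zero_of_zero_dvd] at hd,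
        le_trans (Nat.le_of_dvd (Nat.pos_of_ne_zero h0) hd.1) hle⟩
    rw [← h1, ← Finset.sum_filter]
    apply (Finset.sum_subset _ _).symm
    · intro d hd
      rw [Finset.mem_filter] at hd
      exact Nat.mem_divisors.2 ⟨hd.2, h0⟩
    · intro d hd hnd
      exfalso; apply hnd
      rw [Finset.mem_filter]
      exact ⟨h2 hd, (Nat.mem_divisors.1 hd).1⟩
  calc (((S.filter (fun x : Fin k → ℕ => Finset.univ.gcd x = 1)).card : ℤ))
      = ∑ x ∈ S, if Finset.univ.gcd x = 1 then (1:ℤ) else 0 := by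
        simp [Finset.sum_boole]
    _ = ∑ x ∈ S, ∑ d ∈ Finset.Icc 1 N, if d ∣ Finset.univ.gcd x then μ d else 0 :=
        Finset.sum_congr rfl key
    _ = ∑ d ∈ Finset.Icc 1 N, ∑ x ∈ S, if d ∣ Finset.univ.gcd x then μ d else 0 :=
        Finset.sum_comm
    _ = ∑ d ∈ Finset.Icc 1 N, μ d * ((N / d : ℕ) : ℤ) ^ k := by
        refine Finset.sum_congr rfl fun d _ => ?_
        rw [← Finset.sum_filter, Finset.sum_const, nsmul_eq_mul, mul_comm]
        congr 1
        have hdvd : ∀ x : Fin k → ℕ, d ∣ Finset.univ.gcd x ↔ ∀ i, d ∣ x i := by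
          intro x
          constructor
          · intro h i; exact h.trans (Finset.gcd_dvd (Finset.mem_univ i))
          · intro h; exact Finset.dvd_gcd fun i _ => h i
        rw [show (S.filter fun x => d ∣ Finset.univ.gcd x)
            = S.filter fun x => ∀ i, d ∣ x i from Finset.filter_congr fun x _ => by
              simp [hdvd x]]
        exact_mod_cast count_div k N d

lemma tsum_moebius (k : ℕ) (hk : 2 ≤ k) :
    (∑' d : ℕ, (μ d : ℝ) / (d : ℝ) ^ k) = 1 / ∑' n : ℕ+, (1 : ℝ) / (n : ℝ) ^ k := by
  have hs : 1 < ((k : ℂ)).re := by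
    simp only [Complex.natCast_re]
    exact_mod_cast lt_of_lt_of_le one_lt_two hk
  have hk0 : k ≠ 0 := by omega
  have hmu : LSeries (fun n => (μ n : ℂ)) (k : ℂ)
      = ((∑' d : ℕ, (μ d : ℝ) / (d : ℝ) ^ k : ℝ) : ℂ) := by
    rw [Complex.ofReal_tsum, LSeries]
    refine tsum_congr fun n => ?_
    rcases eq_or_ne n 0 with rfl | hn
    · simp [LSeries.term_zero, hk0]
    · rw [LSeries.term_of_ne_zero hn]
      push_cast
      rw [Complex.cpow_natCast]
  have hzeta : LSeries (fun n => ((ζ n : ℕ) : ℂ)) (k : ℂ)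
      = ((∑' n : ℕ, (1 : ℝ) / (n : ℝ) ^ k : ℝ) : ℂ) := by
    rw [Complex.ofReal_tsum, LSeries]
    refine tsum_congr fun n => ?_
    rcases eq_or_ne n 0 with rfl | hn
    · simp [LSeries.term_zero, hk0]
    · rw [LSeries.term_of_ne_zero hn]
      simp [ArithmeticFunction.zeta_apply, hn]
  have hZ : (∑' n : ℕ, (1 : ℝ) / (n : ℝ) ^ k) = ∑' n : ℕ+, (1 : ℝ) / (n : ℝ) ^ k := by
    have hsum : Summable (fun n : ℕ => (1 : ℝ) / (n : ℝ) ^ k) :=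
      Real.summable_one_div_nat_pow.mpr (by omega)
    rw [Summable.tsum_eq_zero_add hsum]
    rw [← Equiv.pnatEquivNat.symm.tsum_eq (fun n : ℕ+ => (1 : ℝ) / (n : ℝ) ^ k)]
    simp [Equiv.pnatEquivNat, hk0]
  have hmul := ArithmeticFunction.LSeries_zeta_mul_Lseries_moebius hs
  rw [hmu, hzeta] at hmul
  rw [← Complex.ofReal_mul, ← Complex.ofReal_one] at hmul
  have hmul' := Complex.ofReal_injective hmul
  rw [hZ] at hmul'
  rw [mul_comm] at hmul'
  exact eq_one_div_of_mul_eq_one_left hmul'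

lemma div_tendsto (d : ℕ) (hd : 0 < d) :
    Tendsto (fun N : ℕ => ((N / d : ℕ) : ℝ) / (N : ℝ)) atTop (nhds (1 / d)) := by
  have hd0 : (d : ℝ) ≠ 0 := Nat.cast_ne_zero.mpr hd.ne'
  have key : ∀ᶠ N : ℕ in atTop, ((N / d : ℕ) : ℝ) / (N : ℝ)
      = 1 / d - ((N % d : ℕ) : ℝ) / (d * N) := by
    filter_upwards [eventually_ge_atTop 1] with N hN
    have hN0 : (N : ℝ) ≠ 0 := Nat.cast_ne_zero.mpr (by omega)
    have h := Nat.div_add_mod N d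
    have h' : (d : ℝ) * ((N / d : ℕ) : ℝ) + ((N % d : ℕ) : ℝ) = N := by exact_mod_cast h
    field_simp
    nlinarith [h', sq_nonneg ((N:ℝ))]
  rw [tendsto_congr' key]
  have h0 : Tendsto (fun N : ℕ => ((N % d : ℕ) : ℝ) / (d * N)) atTop (nhds 0) := by
    apply squeeze_zero' (by filter_upwards with N; positivity)
      (g := fun N : ℕ => (1 : ℝ) / N)
    · filter_upwards [eventually_ge_atTop 1] with N hN
      have h1 : ((N % d : ℕ) : ℝ) ≤ d := by
        exact_mod_cast (Nat.mod_lt N hd).le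
      have hN0 : (0:ℝ) < N := by exact_mod_cast by omega
      rw [div_le_div_iff₀ (by positivity) hN0]
      calc ((N % d : ℕ) : ℝ) * N ≤ d * N := by nlinarith
        _ = 1 * (d * N) := by ring
    · exact tendsto_one_div_atTop_nhds_zero_nat
  have := (tendsto_const_nhds (x := (1:ℝ)/d) (f := atTop (α := ℕ))).sub h0
  simpa using this

theorem coprime_tuples_density (k : ℕ) (hk : 2 ≤ k) :
    Tendsto (fun N : ℕ =>
        (((Fintype.piFinset fun _ : Fin k => Finset.Icc 1 N).filter
            (fun x : Fin k → ℕ => Finset.univ.gcd x = 1)).card : ℝ) / (N : ℝ) ^ k)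
      atTop (nhds (1 / ∑' n : ℕ+, (1 : ℝ) / (n : ℝ) ^ k)) := by
  have hk0 : 0 < k := by omega
  set f : ℕ → ℕ → ℝ := fun N d => (μ d : ℝ) * ((N / d : ℕ) : ℝ) ^ k / (N : ℝ) ^ k with hf
  set g : ℕ → ℝ := fun d => (μ d : ℝ) / (d : ℝ) ^ k with hg
  -- the sequence equals the tsum of f, eventually
  have heq : ∀ᶠ N : ℕ in atTop,
      (((Fintype.piFinset fun _ : Fin k => Finset.Icc 1 N).filter
          (fun x : Fin k → ℕ => Finset.univ.gcd x = 1)).card : ℝ) / (N : ℝ) ^ k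
        = ∑' d : ℕ, f N d := by
    filter_upwards [eventually_ge_atTop 1] with N hN
    have hsum : ∑' d : ℕ, f N d = ∑ d ∈ Finset.Icc 1 N, f N d := by
      apply tsum_eq_sum
      intro d hd
      rw [Finset.mem_Icc] at hd
      push_neg at hd
      rcases Nat.eq_zero_or_pos d with rfl | hd1
      · simp [hf]
      · have : N / d = 0 := Nat.div_eq_of_lt (hd hd1)
        simp [hf, this, zero_pow hk0.ne']
    rw [hsum]
    have hc : ((((Fintype.piFinset fun _ : Fin k => Finset.Icc 1 N).filter
        (fun x : Fin k → ℕ => Finset.univ.gcd x = 1)).card : ℝ))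
        = ∑ d ∈ Finset.Icc 1 N, (μ d : ℝ) * ((N / d : ℕ) : ℝ) ^ k := by
      rw [← Int.cast_natCast, count_eq k N hk0]
      simp only [Int.cast_sum, Int.cast_mul, Int.cast_pow, Int.cast_natCast]
    rw [hc, Finset.sum_div]
  rw [← tsum_moebius k hk]
  have heq' : (fun N : ℕ =>
      (((Fintype.piFinset fun _ : Fin k => Finset.Icc 1 N).filter
          (fun x : Fin k → ℕ => Finset.univ.gcd x = 1)).card : ℝ) / (N : ℝ) ^ k)
        =ᶠ[atTop] fun N => ∑' d : ℕ, f N d := heq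
  apply Tendsto.congr' heq'.symm
  -- dominated convergence
  refine tendsto_tsum_of_dominated_convergence (f := f) (g := g)
    (bound := fun d : ℕ => 1 / (d : ℝ) ^ k) ?_ ?_ ?_
  · exact Real.summable_one_div_nat_pow.mpr (by omega)
  · intro d
    rcases Nat.eq_zero_or_pos d with rfl | hd
    · have : (fun N : ℕ => f N 0) = fun _ => 0 := by funext N; simp [hf]
      rw [this]
      have : g 0 = 0 := by simp [hg]
      rw [this]
      exact tendsto_const_nhds
    · have h1 : (fun N : ℕ => f N d)
          =ᶠ[atTop] fun N : ℕ => (μ d : ℝ) * (((N / d : ℕ) : ℝ) / N) ^ k := by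
        filter_upwards [eventually_ge_atTop 1] with N hN
        simp only [hf]
        rw [div_pow, mul_div_assoc]
      apply Tendsto.congr' h1.symm
      have h3 := ((div_tendsto d hd).pow k).const_mul ((μ d : ℝ))
      have h2 : g d = (μ d : ℝ) * ((1 : ℝ) / d) ^ k := by
        simp only [hg]
        rw [div_pow, one_pow, mul_one_div]
      rw [h2]
      exact h3
  · filter_upwards with N
    intro d
    rcases Nat.eq_zero_or_pos d with rfl | hd
    · simp [hf]
    rcases Nat.eq_zero_or_pos N with rfl | hN
    · simp [hf, Nat.zero_div, zero_pow hk0.ne']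
    have hd0 : (0:ℝ) < (d : ℝ) := by exact_mod_cast hd
    have hN0 : (0:ℝ) < (N : ℝ) := by exact_mod_cast hN
    have hmu : |(μ d : ℝ)| ≤ 1 := by
      have := ArithmeticFunction.abs_moebius_le_one (n := d)
      exact_mod_cast this
    simp only [hf, Real.norm_eq_abs]
    have hdivle : ((N / d : ℕ) : ℝ) * d ≤ N := by
      exact_mod_cast Nat.div_mul_le_self N d
    have hkey : ((N / d : ℕ) : ℝ) ^ k / (N : ℝ) ^ k ≤ 1 / (d : ℝ) ^ k := by
      rw [div_le_div_iff₀ (by positivity) (by positivity), one_mul]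
      calc ((N / d : ℕ) : ℝ) ^ k * (d:ℝ) ^ k = (((N / d : ℕ) : ℝ) * d) ^ k := by
            rw [mul_pow]
        _ ≤ (N : ℝ) ^ k := by
            apply pow_le_pow_left₀ (by positivity) hdivle
    rw [abs_div, abs_mul, abs_pow, abs_pow, abs_of_nonneg hN0.le,
      abs_of_nonneg (by positivity : (0:ℝ) ≤ ((N / d : ℕ) : ℝ))]
    calc |(μ d : ℝ)| * ((N / d : ℕ) : ℝ) ^ k / (N : ℝ) ^ k
        ≤ 1 * (((N / d : ℕ) : ℝ) ^ k / (N : ℝ) ^ k) := by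
          rw [mul_div_assoc]
          apply mul_le_mul_of_nonneg_right hmu (by positivity)
      _ ≤ 1 / (d : ℝ) ^ k := by rw [one_mul]; exact hkey
end

section
/- Let a + bi ∈ ℤ[i] with gcd(a,b) = 1 and a,b not both zero. Then the closed fundamental square with vertices 0, a+bi, i(a+bi), (1+i)(a+bi) contains exactly a² + b² − 1 interior lattice points and exactly 4 boundary lattice points of ℤ[i]. -/
open Complex

namespace FSq

noncomputable def T (a b : ℝ) (h : a^2 + b^2 ≠ 0) : (ℝ × ℝ) ≃ₗ[ℝ] ℂ where
  toFun p := ↑(p.1 * a - p.2 * b) + ↑(p.1 * b + p.2 * a) * I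
  invFun z := ((a * z.re + b * z.im) / (a^2+b^2), (a * z.im - b * z.re) / (a^2+b^2))
  map_add' p q := by simp only [Prod.fst_add, Prod.snd_add]; push_cast; ring
  map_smul' c p := by simp only [Prod.smul_fst, Prod.smul_snd, smul_eq_mul, RingHom.id_apply,
    Complex.real_smul]; push_cast; ring
  left_inv p := by
    apply Prod.ext <;>
      simp only [Complex.add_re, Complex.add_im, Complex.mul_re, Complex.mul_im,
        Complex.ofReal_re, Complex.ofReal_im, Complex.I_re, Complex.I_im] <;>
      field_simp <;> ring
  right_inv z := by
    apply Complex.ext <;>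
      simp only [Complex.add_re, Complex.add_im, Complex.mul_re, Complex.mul_im,
        Complex.ofReal_re, Complex.ofReal_im, Complex.I_re, Complex.I_im] <;>
      field_simp <;> ring

end FSq

namespace FSq

theorem hull_eq (a b : ℝ) (h : a^2+b^2 ≠ 0) :
    convexHull ℝ ({0, (a:ℂ) + b*I, I*((a:ℂ)+b*I), (1+I)*((a:ℂ)+b*I)} : Set ℂ)
      = T a b h '' (Set.Icc 0 1 ×ˢ Set.Icc 0 1) := by
  have h1 : (({0,1} : Set ℝ) ×ˢ ({0,1} : Set ℝ))
      = ({(0,0),(1,0),(0,1),(1,1)} : Set (ℝ×ℝ)) := by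
    ext ⟨x,y⟩
    simp [Prod.ext_iff]
    tauto
  have h2 : ({0, (a:ℂ) + b*I, I*((a:ℂ)+b*I), (1+I)*((a:ℂ)+b*I)} : Set ℂ)
      = T a b h '' (({0,1} : Set ℝ) ×ˢ ({0,1} : Set ℝ)) := by
    rw [h1]
    simp only [Set.image_insert_eq, Set.image_singleton]
    have e0 : T a b h (0,0) = 0 := by simp [T]
    have e1 : T a b h (1,0) = (a:ℂ) + b*I := by simp [T]
    have e2 : T a b h (0,1) = I*((a:ℂ)+b*I) := by
      simp [T]; linear_combination (-(b:ℂ)) * Complex.I_sq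
    have e3 : T a b h (1,1) = (1+I)*((a:ℂ)+b*I) := by
      simp [T]; push_cast; linear_combination (-(b:ℂ)) * Complex.I_sq
    rw [e0, e1, e2, e3]
  rw [h2, show ⇑(T a b h) = ⇑((T a b h).toLinearMap) from rfl,
    ← LinearMap.image_convexHull, convexHull_prod, convexHull_pair,
    segment_eq_Icc zero_le_one]

end FSq

namespace FSq

theorem T_eq (a b x y : ℝ) (h : a^2+b^2 ≠ 0) :
    T a b h ((a*x+b*y)/(a^2+b^2), (a*y-b*x)/(a^2+b^2)) = ↑x + ↑y * I := by
  show (↑(_ * a - _ * b) : ℂ) + ↑(_ * b + _ * a) * I = ↑x + ↑y * I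
  rw [Complex.ext_iff]
  constructor <;>
    simp only [Complex.add_re, Complex.add_im, Complex.mul_re, Complex.mul_im,
      Complex.ofReal_re, Complex.ofReal_im, Complex.I_re, Complex.I_im] <;>
    field_simp <;> ring

theorem mem_image_T (a b : ℝ) (h : a^2+b^2 ≠ 0) (S : Set (ℝ × ℝ)) (x y : ℝ) :
    (↑x + ↑y * I ∈ T a b h '' S) ↔
      ((a*x+b*y)/(a^2+b^2), (a*y-b*x)/(a^2+b^2)) ∈ S := by
  rw [← T_eq a b x y h]
  exact Function.Injective.mem_set_image (T a b h).injective

theorem mem_interior_iff (a b x y : ℝ) (h : a^2+b^2 ≠ 0) (hpos : 0 < a^2+b^2) :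
    (↑x + ↑y * I ∈ interior (convexHull ℝ
        ({0, (a:ℂ) + b*I, I*((a:ℂ)+b*I), (1+I)*((a:ℂ)+b*I)} : Set ℂ))) ↔
      (0 < a*x+b*y ∧ a*x+b*y < a^2+b^2 ∧ 0 < a*y-b*x ∧ a*y-b*x < a^2+b^2) := by
  rw [hull_eq a b h]
  have hco : ⇑(T a b h) = ⇑((T a b h).toContinuousLinearEquiv.toHomeomorph) := rfl
  rw [hco, ← Homeomorph.image_interior, interior_prod_eq, interior_Icc, ← hco,
    mem_image_T]
  simp only [Set.mem_prod, Set.mem_Ioo, div_lt_one hpos, lt_div_iff₀ hpos, zero_mul]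
  tauto

theorem mem_hull_iff (a b x y : ℝ) (h : a^2+b^2 ≠ 0) (hpos : 0 < a^2+b^2) :
    (↑x + ↑y * I ∈ (convexHull ℝ
        ({0, (a:ℂ) + b*I, I*((a:ℂ)+b*I), (1+I)*((a:ℂ)+b*I)} : Set ℂ))) ↔
      (0 ≤ a*x+b*y ∧ a*x+b*y ≤ a^2+b^2 ∧ 0 ≤ a*y-b*x ∧ a*y-b*x ≤ a^2+b^2) := by
  rw [hull_eq a b h, mem_image_T]
  simp only [Set.mem_prod, Set.mem_Icc, div_le_one hpos, le_div_iff₀ hpos, zero_mul]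
  tauto

theorem frontier_hull (a b : ℝ) :
    frontier (convexHull ℝ
        ({0, (a:ℂ) + b*I, I*((a:ℂ)+b*I), (1+I)*((a:ℂ)+b*I)} : Set ℂ))
      = (convexHull ℝ ({0, (a:ℂ) + b*I, I*((a:ℂ)+b*I), (1+I)*((a:ℂ)+b*I)} : Set ℂ))
        \ interior (convexHull ℝ
          ({0, (a:ℂ) + b*I, I*((a:ℂ)+b*I), (1+I)*((a:ℂ)+b*I)} : Set ℂ)) :=
  (((Set.toFinite _).isCompact_convexHull ℝ).isClosed).frontier_eq

end FSq

namespace FSq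

theorem coprime_N (a b : ℤ) (hab : IsCoprime a b) : IsCoprime a (a^2+b^2) := by
  have := (hab.pow_right (n := 2)).add_mul_left_right a
  convert this using 1
  · rfl
  · ring

theorem dvd_cancel (a N m : ℤ) (h : IsCoprime a N) (hd : N ∣ a * m) : N ∣ m :=
  h.symm.dvd_of_dvd_mul_left hd

theorem count_interior (a b : ℤ) (hab : Int.gcd a b = 1) (h0 : ¬(a = 0 ∧ b = 0)) :
    {p : ℤ × ℤ | 0 < a*p.1+b*p.2 ∧ a*p.1+b*p.2 < a^2+b^2 ∧
      0 < a*p.2-b*p.1 ∧ a*p.2-b*p.1 < a^2+b^2}.ncard = (a^2+b^2-1).toNat := by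
  set N : ℤ := a^2+b^2 with hNdef
  have hcop : IsCoprime a b := Int.isCoprime_iff_gcd_eq_one.mpr hab
  have hca : IsCoprime a N := coprime_N a b hcop
  have hcb : IsCoprime b N := by
    rw [hNdef, add_comm (a^2)]
    exact coprime_N b a hcop.symm
  have hN : 0 < N := by
    rcases (by tauto : a ≠ 0 ∨ b ≠ 0) with h | h <;> positivity
  set S : Set (ℤ × ℤ) := {p : ℤ × ℤ | 0 < a*p.1+b*p.2 ∧ a*p.1+b*p.2 < N ∧
      0 < a*p.2-b*p.1 ∧ a*p.2-b*p.1 < N} with hSdef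
  set f : ℤ × ℤ → ℤ := fun p => a*p.2 - b*p.1 with hfdef
  have hinj : Set.InjOn f S := by
    rintro ⟨x, y⟩ hp ⟨x', y'⟩ hq hw
    simp only [hSdef, Set.mem_setOf_eq] at hp hq
    simp only [hfdef] at hw
    -- key identities
    have id1 : a * (a*x+b*y) - b * (a*y-b*x) = N * x := by ring
    have id1' : a * (a*x'+b*y') - b * (a*y'-b*x') = N * x' := by ring
    have id2 : b * (a*x+b*y) + a * (a*y-b*x) = N * y := by ring
    have id2' : b * (a*x'+b*y') + a * (a*y'-b*x') = N * y' := by ring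
    have hdvd : N ∣ a * ((a*x+b*y) - (a*x'+b*y')) := by
      refine ⟨x - x', ?_⟩
      rw [hw] at id1
      linarith [id1, id1']
    have hu : (a*x+b*y) = (a*x'+b*y') := by
      have hz : (a*x+b*y) - (a*x'+b*y') = 0 :=
        Int.eq_zero_of_abs_lt_dvd (dvd_cancel a N _ hca hdvd)
          (abs_sub_lt_iff.mpr ⟨by linarith [hp.1, hp.2.1, hq.1, hq.2.1],
            by linarith [hp.1, hp.2.1, hq.1, hq.2.1]⟩)
      linarith
    have hx : x = x' := by
      rw [hw, hu] at id1
      have : N * x = N * x' := by rw [← id1, ← id1']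
      exact mul_left_cancel₀ hN.ne' this
    have hy : y = y' := by
      rw [hw, hu] at id2
      have : N * y = N * y' := by rw [← id2, ← id2']
      exact mul_left_cancel₀ hN.ne' this
    simp [hx, hy]
  have himg : f '' S = Set.Ioo 0 N := by
    apply Set.Subset.antisymm
    · rintro w ⟨⟨x, y⟩, hp, rfl⟩
      simp only [hSdef, Set.mem_setOf_eq] at hp
      exact ⟨hp.2.2.1, hp.2.2.2⟩
    · rintro w ⟨hw0, hwN⟩
      obtain ⟨c, d, hcd⟩ := hca
      set u0 : ℤ := c*b*w with hu0
      set u : ℤ := u0 % N with hu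
      have hdiv : u0 % N + N * (u0 / N) = u0 := Int.emod_add_mul_ediv u0 N
      have hd1 : N ∣ a * u - b * w := by
        refine ⟨-d*b*w - a*(u0/N), ?_⟩
        have : u = u0 - N * (u0 / N) := by omega
        rw [this, hu0]
        linear_combination (b*w) * hcd
      have hd2 : N ∣ b * u + a * w := by
        apply dvd_cancel b N _ hcb
        have : b * (b * u + a * w) = N * u - a * (a * u - b * w) := by ring
        rw [this]
        exact dvd_sub (Dvd.intro u rfl) (Dvd.dvd.mul_left hd1 a)
      have hu_nonneg : 0 ≤ u := Int.emod_nonneg u0 hN.ne'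
      have hu_lt : u < N := Int.emod_lt_of_pos u0 hN
      have hu_pos : 0 < u := by
        rcases hu_nonneg.lt_or_eq with h | h
        · exact h
        · exfalso
          have hbw : N ∣ b * w := by
            have h2 := hd1
            rw [← h] at h2
            simp only [mul_zero, zero_sub, dvd_neg] at h2
            exact h2
          have hw' : N ∣ w := dvd_cancel b N w hcb hbw
          have := Int.le_of_dvd hw0 hw'
          omega
      obtain ⟨k1, hk1⟩ := hd1
      obtain ⟨k2, hk2⟩ := hd2
      refine ⟨(k1, k2), ?_, ?_⟩
      · have e1 : a * k1 + b * k2 = u := by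
          apply mul_left_cancel₀ hN.ne'
          have : N * (a * k1 + b * k2) = a * (N * k1) + b * (N * k2) := by ring
          rw [this, ← hk1, ← hk2]
          ring
        have e2 : a * k2 - b * k1 = w := by
          apply mul_left_cancel₀ hN.ne'
          have : N * (a * k2 - b * k1) = a * (N * k2) - b * (N * k1) := by ring
          rw [this, ← hk1, ← hk2]
          ring
        simp only [hSdef, Set.mem_setOf_eq]
        rw [e1, e2]
        exact ⟨hu_pos, hu_lt, hw0, hwN⟩
      · have e2 : a * k2 - b * k1 = w := by
          apply mul_left_cancel₀ hN.ne'
          have : N * (a * k2 - b * k1) = a * (N * k2) - b * (N * k1) := by ring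
          rw [this, ← hk1, ← hk2]
          ring
        simpa [hfdef] using e2
  have : S.ncard = (Set.Ioo (0:ℤ) N).ncard := by
    rw [← himg, Set.ncard_image_of_injOn hinj]
  rw [this, ← Finset.coe_Ioo, Set.ncard_coe_finset, Int.card_Ioo]
  congr 1
  omega

end FSq

namespace FSq

theorem boundary_set (a b : ℤ) (hab : Int.gcd a b = 1) (h0 : ¬(a = 0 ∧ b = 0)) :
    {p : ℤ × ℤ | (0 ≤ a*p.1+b*p.2 ∧ a*p.1+b*p.2 ≤ a^2+b^2 ∧
        0 ≤ a*p.2-b*p.1 ∧ a*p.2-b*p.1 ≤ a^2+b^2) ∧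
      ¬(0 < a*p.1+b*p.2 ∧ a*p.1+b*p.2 < a^2+b^2 ∧
        0 < a*p.2-b*p.1 ∧ a*p.2-b*p.1 < a^2+b^2)}
    = ({(0,0),(a,b),(-b,a),(a-b,a+b)} : Set (ℤ × ℤ)) := by
  set N : ℤ := a^2+b^2 with hNdef
  have hcop : IsCoprime a b := Int.isCoprime_iff_gcd_eq_one.mpr hab
  have hca : IsCoprime a N := coprime_N a b hcop
  have hcb : IsCoprime b N := by
    rw [hNdef, add_comm (a^2)]
    exact coprime_N b a hcop.symm
  have hN : 0 < N := by
    rcases (by tauto : a ≠ 0 ∨ b ≠ 0) with h | h <;> positivity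
  ext ⟨x, y⟩
  simp only [Set.mem_setOf_eq, Set.mem_insert_iff, Set.mem_singleton_iff, Prod.mk.injEq]
  constructor
  · rintro ⟨⟨h1, h2, h3, h4⟩, hni⟩
    set u : ℤ := a*x+b*y with hu
    set w : ℤ := a*y-b*x with hw
    have id1 : a * u - b * w = N * x := by rw [hu, hw]; ring
    have id2 : b * u + a * w = N * y := by rw [hu, hw]; ring
    -- from non-interior: u ∈ {0, N} or w ∈ {0, N}
    have hcases : u = 0 ∨ u = N ∨ w = 0 ∨ w = N := by omega
    have dvd_of_u : (u = 0 ∨ u = N) → (w = 0 ∨ w = N) := by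
      rintro h
      have hbw : N ∣ b * w := by
        rcases h with h | h
        · refine ⟨-x, ?_⟩; rw [h] at id1; linarith
        · refine ⟨a - x, ?_⟩; rw [h] at id1; linarith
      have hwdvd : N ∣ w := dvd_cancel b N w hcb hbw
      rcases eq_or_lt_of_le h3 with h' | h'
      · left; omega
      · right
        exact le_antisymm h4 (Int.le_of_dvd h' hwdvd)
    have dvd_of_w : (w = 0 ∨ w = N) → (u = 0 ∨ u = N) := by
      rintro h
      have hbu : N ∣ b * u := by
        rcases h with h | h
        · refine ⟨y, ?_⟩; rw [h] at id2; linarith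
        · refine ⟨y - a, ?_⟩; rw [h] at id2; linarith
      have hudvd : N ∣ u := dvd_cancel b N u hcb hbu
      rcases eq_or_lt_of_le h1 with h' | h'
      · left; omega
      · right
        exact le_antisymm h2 (Int.le_of_dvd h' hudvd)
    have hboth : (u = 0 ∨ u = N) ∧ (w = 0 ∨ w = N) := by
      rcases hcases with h | h | h | h
      · exact ⟨Or.inl h, dvd_of_u (Or.inl h)⟩
      · exact ⟨Or.inr h, dvd_of_u (Or.inr h)⟩
      · exact ⟨dvd_of_w (Or.inl h), Or.inl h⟩
      · exact ⟨dvd_of_w (Or.inr h), Or.inr h⟩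
    obtain ⟨hu', hw'⟩ := hboth
    have hxN : N * x = a * u - b * w := id1.symm
    have hyN : N * y = b * u + a * w := id2.symm
    rcases hu' with h | h <;> rcases hw' with h' | h' <;> rw [h, h'] at hxN hyN
    · exact Or.inl ⟨mul_left_cancel₀ hN.ne' (by linear_combination hxN),
        mul_left_cancel₀ hN.ne' (by linear_combination hyN)⟩
    · exact Or.inr (Or.inr (Or.inl ⟨mul_left_cancel₀ hN.ne' (by linear_combination hxN),
        mul_left_cancel₀ hN.ne' (by linear_combination hyN)⟩))
    · exact Or.inr (Or.inl ⟨mul_left_cancel₀ hN.ne' (by linear_combination hxN),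
        mul_left_cancel₀ hN.ne' (by linear_combination hyN)⟩)
    · exact Or.inr (Or.inr (Or.inr ⟨mul_left_cancel₀ hN.ne' (by linear_combination hxN),
        mul_left_cancel₀ hN.ne' (by linear_combination hyN)⟩))
  · rintro (⟨hx, hy⟩ | ⟨hx, hy⟩ | ⟨hx, hy⟩ | ⟨hx, hy⟩) <;> rw [hx, hy] <;>
      refine ⟨⟨by nlinarith [sq_nonneg a, sq_nonneg b, hN],
        by nlinarith [sq_nonneg a, sq_nonneg b, hN],
        by nlinarith [sq_nonneg a, sq_nonneg b, hN],
        by nlinarith [sq_nonneg a, sq_nonneg b, hN]⟩, ?_⟩ <;>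
      rintro ⟨c1, c2, c3, c4⟩ <;>
      nlinarith [sq_nonneg a, sq_nonneg b, hN, c1, c2, c3, c4]

end FSq

namespace FSq

theorem four_card (a b : ℤ) (h0 : ¬(a = 0 ∧ b = 0)) :
    ({(0,0),(a,b),(-b,a),(a-b,a+b)} : Set (ℤ × ℤ)).ncard = 4 := by
  rw [Set.ncard_insert_of_notMem (by simp [Prod.ext_iff]; omega) (Set.toFinite _),
    Set.ncard_insert_of_notMem (by simp [Prod.ext_iff]; omega) (Set.toFinite _),
    Set.ncard_insert_of_notMem (by simp [Prod.ext_iff]; omega) (Set.toFinite _),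
    Set.ncard_singleton]

end FSq

open Complex in
theorem fundamental_square_lattice_points (a b : ℤ)
    (hab : Int.gcd a b = 1) (h0 : ¬(a = 0 ∧ b = 0)) :
    (({p : ℤ × ℤ | ((p.1 : ℂ) + (p.2 : ℂ) * I) ∈
          interior (convexHull ℝ
            ({0, (a : ℂ) + (b : ℂ) * I, I * ((a : ℂ) + (b : ℂ) * I),
              (1 + I) * ((a : ℂ) + (b : ℂ) * I)} : Set ℂ))}.ncard : ℤ)
        = a ^ 2 + b ^ 2 - 1) ∧
    ({p : ℤ × ℤ | ((p.1 : ℂ) + (p.2 : ℂ) * I) ∈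
          frontier (convexHull ℝ
            ({0, (a : ℂ) + (b : ℂ) * I, I * ((a : ℂ) + (b : ℂ) * I),
              (1 + I) * ((a : ℂ) + (b : ℂ) * I)} : Set ℂ))}.ncard = 4) := by
  have hNr : ((a:ℝ))^2 + ((b:ℝ))^2 ≠ 0 := by
    rcases (by tauto : a ≠ 0 ∨ b ≠ 0) with h | h
    · have h' : (a:ℝ) ≠ 0 := Int.cast_ne_zero.mpr h
      positivity
    · have h' : (b:ℝ) ≠ 0 := Int.cast_ne_zero.mpr h
      positivity
  have hposr : (0:ℝ) < (a:ℝ)^2 + (b:ℝ)^2 := by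
    rcases hNr.lt_or_gt with h | h
    · nlinarith [sq_nonneg (a:ℝ), sq_nonneg (b:ℝ)]
    · exact h
  constructor
  · have hset : {p : ℤ × ℤ | ((p.1 : ℂ) + (p.2 : ℂ) * I) ∈
          interior (convexHull ℝ
            ({0, (a : ℂ) + (b : ℂ) * I, I * ((a : ℂ) + (b : ℂ) * I),
              (1 + I) * ((a : ℂ) + (b : ℂ) * I)} : Set ℂ))}
        = {p : ℤ × ℤ | 0 < a*p.1+b*p.2 ∧ a*p.1+b*p.2 < a^2+b^2 ∧
            0 < a*p.2-b*p.1 ∧ a*p.2-b*p.1 < a^2+b^2} := by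
      ext ⟨x, y⟩
      simp only [Set.mem_setOf_eq]
      have hm := FSq.mem_interior_iff (a:ℝ) (b:ℝ) (x:ℝ) (y:ℝ) hNr hposr
      push_cast at hm
      rw [hm]
      exact_mod_cast Iff.rfl
    rw [hset, FSq.count_interior a b hab h0]
    have hN1 : (1:ℤ) ≤ a^2+b^2 := by
      rcases (by tauto : a ≠ 0 ∨ b ≠ 0) with h | h
      · have h2 : 0 < a^2 := by positivity
        nlinarith [sq_nonneg b]
      · have h2 : 0 < b^2 := by positivity
        nlinarith [sq_nonneg a]
    omega
  · have hset : {p : ℤ × ℤ | ((p.1 : ℂ) + (p.2 : ℂ) * I) ∈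
          frontier (convexHull ℝ
            ({0, (a : ℂ) + (b : ℂ) * I, I * ((a : ℂ) + (b : ℂ) * I),
              (1 + I) * ((a : ℂ) + (b : ℂ) * I)} : Set ℂ))}
        = {p : ℤ × ℤ | (0 ≤ a*p.1+b*p.2 ∧ a*p.1+b*p.2 ≤ a^2+b^2 ∧
            0 ≤ a*p.2-b*p.1 ∧ a*p.2-b*p.1 ≤ a^2+b^2) ∧
          ¬(0 < a*p.1+b*p.2 ∧ a*p.1+b*p.2 < a^2+b^2 ∧
            0 < a*p.2-b*p.1 ∧ a*p.2-b*p.1 < a^2+b^2)} := by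
      ext ⟨x, y⟩
      simp only [Set.mem_setOf_eq]
      have hf := FSq.frontier_hull (a:ℝ) (b:ℝ)
      have hm := FSq.mem_interior_iff (a:ℝ) (b:ℝ) (x:ℝ) (y:ℝ) hNr hposr
      have hh := FSq.mem_hull_iff (a:ℝ) (b:ℝ) (x:ℝ) (y:ℝ) hNr hposr
      push_cast at hf hm hh
      rw [hf, Set.mem_diff, hm, hh]
      constructor
      · rintro ⟨h1, h2⟩
        exact ⟨by exact_mod_cast h1, by exact_mod_cast h2⟩
      · rintro ⟨h1, h2⟩
        exact ⟨by exact_mod_cast h1, by exact_mod_cast h2⟩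
    rw [hset, FSq.boundary_set a b hab h0]
    exact FSq.four_card a b h0
end
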